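/- Let X₁, …, Xₙ be independent real-valued random variables with E[Xⱼ] = 0, finite forward deviations σ_f(Xⱼ) and finite backward deviations σ_b(Xⱼ). Let a ∈ ℝⁿ, define uⱼ := max(aⱼ·σ_f(Xⱼ), −aⱼ·σ_b(Xⱼ)) ≥ 0, and assume ‖u‖₂ > 0. Then for every Ω > 0, Pr( Σⱼ aⱼ Xⱼ > Ω · ‖u‖₂ ) ≤ exp(−Ω²/2). -/

import Mathlib

open MeasureTheory ProbabilityTheory

/-- The set of candidate values whose supremum is the forward deviation
`σ_f(X) = sup_{θ>0} √(2 θ⁻² log E[exp(θX)])`. -/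
def fwdDevSet {Ω : Type*} [MeasurableSpace Ω] (μ : Measure Ω) (X : Ω → ℝ) : Set ℝ :=
  {s : ℝ | ∃ θ : ℝ, 0 < θ ∧
    s = Real.sqrt (2 * θ⁻¹ ^ 2 * Real.log (∫ ω, Real.exp (θ * X ω) ∂μ))}

/-- The forward deviation of a random variable `X`:
`σ_f(X) = sup_{θ>0} √(2 θ⁻² log E[exp(θX)])`.  The backward deviation is `σ_b(X) = σ_f(−X)`. -/
noncomputable def fwdDev {Ω : Type*} [MeasurableSpace Ω] (μ : Measure Ω) (X : Ω → ℝ) : ℝ :=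
  sSup (fwdDevSet μ X)

lemma fwdDev_nonneg {Ω : Type*} [MeasurableSpace Ω] (μ : Measure Ω) (X : Ω → ℝ)
    (hb : BddAbove (fwdDevSet μ X)) : 0 ≤ fwdDev μ X :=
  le_trans (Real.sqrt_nonneg _) (le_csSup hb ⟨1, one_pos, rfl⟩)

lemma mgf_le_of_fwdDev {Ω : Type*} [MeasurableSpace Ω] (μ : Measure Ω) [IsProbabilityMeasure μ]
    (Z : Ω → ℝ) (t : ℝ) (ht : 0 < t)
    (hint : Integrable (fun ω => Real.exp (t * Z ω)) μ)
    (hb : BddAbove (fwdDevSet μ Z)) :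
    mgf Z μ t ≤ Real.exp (t ^ 2 * (fwdDev μ Z) ^ 2 / 2) := by
  set σ := fwdDev μ Z with hσ
  have hσ0 : 0 ≤ σ := fwdDev_nonneg μ Z hb
  set L := Real.log (∫ ω, Real.exp (t * Z ω) ∂μ) with hL
  have h1 : Real.sqrt (2 * t⁻¹ ^ 2 * L) ≤ σ := le_csSup hb ⟨t, ht, rfl⟩
  have h2 : L ≤ t ^ 2 * σ ^ 2 / 2 := by
    rcases le_or_gt (2 * t⁻¹ ^ 2 * L) 0 with h | h
    · have hc : 0 < 2 * t⁻¹ ^ 2 := by positivity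
      have hL0 : L ≤ 0 := by nlinarith
      have : (0:ℝ) ≤ t ^ 2 * σ ^ 2 / 2 := by positivity
      linarith
    · have h3 : 2 * t⁻¹ ^ 2 * L ≤ σ ^ 2 := by
        have := pow_le_pow_left₀ (Real.sqrt_nonneg _) h1 2
        rwa [Real.sq_sqrt h.le] at this
      calc L = t ^ 2 / 2 * (2 * t⁻¹ ^ 2 * L) := by
              field_simp
            _ ≤ t ^ 2 / 2 * σ ^ 2 := by
              exact mul_le_mul_of_nonneg_left h3 (by positivity)
            _ = t ^ 2 * σ ^ 2 / 2 := by ring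
  have hpos : 0 < ∫ ω, Real.exp (t * Z ω) ∂μ := mgf_pos hint
  calc mgf Z μ t = Real.exp L := (Real.exp_log hpos).symm
    _ ≤ _ := Real.exp_le_exp.mpr h2

/-- For independent mean-zero random variables `X₁,…,Xₙ` with finite forward and backward
deviations, and `uⱼ = max(aⱼ σ_f(Xⱼ), −aⱼ σ_b(Xⱼ))` with `‖u‖₂ > 0`,
`Pr(Σⱼ aⱼ Xⱼ > Ω‖u‖₂) ≤ exp(−Ω²/2)` for every `Ω > 0`. -/
theorem stmt_5 {Ω : Type*} [MeasurableSpace Ω] (μ : Measure Ω) [IsProbabilityMeasure μ]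
    (n : ℕ) (X : Fin n → Ω → ℝ) (hX : ∀ j, Measurable (X j))
    (hindep : iIndepFun X μ)
    (hmean : ∀ j, ∫ ω, X j ω ∂μ = 0)
    (hint : ∀ j, ∀ θ : ℝ, Integrable (fun ω => Real.exp (θ * X j ω)) μ)
    (hfin_f : ∀ j, BddAbove (fwdDevSet μ (X j)))
    (hfin_b : ∀ j, BddAbove (fwdDevSet μ (fun ω => -X j ω)))
    (a u : Fin n → ℝ)
    (hu : ∀ j, u j = max (a j * fwdDev μ (X j)) (-a j * fwdDev μ (fun ω => -X j ω)))
    (hupos : 0 < Real.sqrt (∑ j, u j ^ 2))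
    (Om : ℝ) (hOm : 0 < Om) :
    μ {ω | Om * Real.sqrt (∑ j, u j ^ 2) < ∑ j, a j * X j ω} ≤
      ENNReal.ofReal (Real.exp (-Om ^ 2 / 2)) := by
  set S := Real.sqrt (∑ j, u j ^ 2) with hS
  have hSpos : 0 < S := hupos
  set θ := Om / S with hθdef
  have hθ : 0 < θ := div_pos hOm hSpos
  set Y : Fin n → Ω → ℝ := fun j ω => a j * X j ω with hY
  have hYmeas : ∀ j, Measurable (Y j) := fun j => (hX j).const_mul (a j)
  have hYindep : iIndepFun Y μ :=
    hindep.comp (fun j x => a j * x) (fun j => measurable_const_mul (a j))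
  have hYint : ∀ j, Integrable (fun ω => Real.exp (θ * Y j ω)) μ := by
    intro j
    have := hint j (θ * a j)
    simpa [hY, mul_assoc] using this
  -- per-coordinate mgf bound
  have hubd : ∀ j, mgf (Y j) μ θ ≤ Real.exp (θ ^ 2 * u j ^ 2 / 2) := by
    intro j
    have huj : 0 ≤ u j := by
      rcases le_or_gt 0 (a j) with h | h
      · exact le_max_of_le_left (by
          have := fwdDev_nonneg μ (X j) (hfin_f j)
          positivity) |>.trans_eq (hu j).symm |>.trans_eq rfl
      · exact le_max_of_le_right (by
          have := fwdDev_nonneg μ (fun ω => -X j ω) (hfin_b j)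
          have : 0 ≤ -a j * fwdDev μ (fun ω => -X j ω) :=
            mul_nonneg (by linarith) this
          exact this) |>.trans_eq (hu j).symm |>.trans_eq rfl
    rcases lt_trichotomy (a j) 0 with h | h | h
    · -- a j < 0 : use backward deviation
      have hmg : mgf (Y j) μ θ = mgf (fun ω => -X j ω) μ (θ * (-a j)) := by
        unfold mgf
        congr 1 with ω
        simp only [hY]
        ring_nf
      have hintb : Integrable (fun ω => Real.exp ((θ * (-a j)) * (-X j ω))) μ := by
        have := hint j (-(θ * (-a j)))
        simpa [mul_comm, mul_assoc, mul_left_comm, neg_mul, mul_neg] using this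
      have hb := mgf_le_of_fwdDev μ (fun ω => -X j ω) (θ * (-a j))
        (by nlinarith) hintb (hfin_b j)
      rw [hmg]
      refine hb.trans (Real.exp_le_exp.mpr ?_)
      have hle : -a j * fwdDev μ (fun ω => -X j ω) ≤ u j := (hu j) ▸ le_max_right _ _
      have hge : 0 ≤ -a j * fwdDev μ (fun ω => -X j ω) :=
        mul_nonneg (by linarith) (fwdDev_nonneg μ _ (hfin_b j))
      nlinarith [sq_nonneg θ, mul_le_mul hle hle hge huj]
    · -- a j = 0
      have : mgf (Y j) μ θ = 1 := by
        unfold mgf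
        simp [hY, h]
      rw [this]
      have : 0 ≤ θ ^ 2 * u j ^ 2 / 2 := by positivity
      simpa using Real.exp_le_exp.mpr this |>.trans_eq' (Real.exp_zero)
    · -- 0 < a j : use forward deviation
      have hmg : mgf (Y j) μ θ = mgf (X j) μ (θ * a j) := by
        unfold mgf
        congr 1 with ω
        simp only [hY]
        ring_nf
      have hb := mgf_le_of_fwdDev μ (X j) (θ * a j) (by positivity) (by
        simpa [mul_assoc] using hint j (θ * a j)) (hfin_f j)
      rw [hmg]
      refine hb.trans (Real.exp_le_exp.mpr ?_)
      have hle : a j * fwdDev μ (X j) ≤ u j := (hu j) ▸ le_max_left _ _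
      have hge : 0 ≤ a j * fwdDev μ (X j) :=
        mul_nonneg h.le (fwdDev_nonneg μ _ (hfin_f j))
      nlinarith [sq_nonneg θ, mul_le_mul hle hle hge huj]
  -- mgf of sum
  have hintsum : Integrable (fun ω => Real.exp (θ * (∑ j, Y j) ω)) μ :=
    hYindep.integrable_exp_mul_sum hYmeas (fun j _ => hYint j)
  have hmgfsum : mgf (∑ j, Y j) μ θ ≤ Real.exp (θ ^ 2 * S ^ 2 / 2) := by
    rw [hYindep.mgf_sum hYmeas Finset.univ]
    calc ∏ j, mgf (Y j) μ θ ≤ ∏ j, Real.exp (θ ^ 2 * u j ^ 2 / 2) :=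
          Finset.prod_le_prod (fun j _ => mgf_nonneg) (fun j _ => hubd j)
      _ = Real.exp (∑ j, θ ^ 2 * u j ^ 2 / 2) := by rw [Real.exp_sum]
      _ = Real.exp (θ ^ 2 * S ^ 2 / 2) := by
          rw [hS, Real.sq_sqrt (by positivity : (0:ℝ) ≤ ∑ j, u j ^ 2),
            Finset.mul_sum, Finset.sum_div]
  -- Chernoff
  have hcher := measure_ge_le_exp_mul_mgf (μ := μ) (X := ∑ j, Y j) (Om * S) hθ.le hintsum
  have hfinal : (μ {ω | Om * S ≤ (∑ j, Y j) ω}).toReal ≤ Real.exp (-Om ^ 2 / 2) := by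
    refine hcher.trans ?_
    calc Real.exp (-θ * (Om * S)) * mgf (∑ j, Y j) μ θ
        ≤ Real.exp (-θ * (Om * S)) * Real.exp (θ ^ 2 * S ^ 2 / 2) := by
          exact mul_le_mul_of_nonneg_left hmgfsum (Real.exp_pos _).le
      _ = Real.exp (-θ * (Om * S) + θ ^ 2 * S ^ 2 / 2) := (Real.exp_add _ _).symm
      _ = Real.exp (-Om ^ 2 / 2) := by
          congr 1
          have hθS : θ * S = Om := div_mul_cancel₀ Om hSpos.ne'
          nlinarith [hθS]
  calc μ {ω | Om * S < ∑ j, a j * X j ω}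
      ≤ μ {ω | Om * S ≤ (∑ j, Y j) ω} := by
        refine measure_mono fun ω h => ?_
        simp only [Set.mem_setOf_eq, Finset.sum_apply] at h ⊢
        exact le_of_lt h
    _ = ENNReal.ofReal ((μ {ω | Om * S ≤ (∑ j, Y j) ω}).toReal) :=
        (ENNReal.ofReal_toReal (measure_ne_top μ _)).symm
    _ ≤ ENNReal.ofReal (Real.exp (-Om ^ 2 / 2)) := ENNReal.ofReal_le_ofReal hfinal
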